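/- Every finite MV-algebra is isomorphic to a finite product Łₙ₁ × ⋯ × Łₙₜ of finite MV-chains, and this representation is unique up to reordering of the factors. -/

import Mathlib

structure MVAlgebra (A : Type*) where
  add : A → A → A
  neg : A → A
  zero : A
  add_assoc : ∀ x y z : A, add x (add y z) = add (add x y) z
  add_comm : ∀ x y : A, add x y = add y x
  add_zero : ∀ x : A, add x zero = x
  neg_neg : ∀ x : A, neg (neg x) = x
  add_neg_zero : ∀ x : A, add x (neg zero) = neg zero
  luk : ∀ x y : A, add (neg (add (neg x) y)) y = add (neg (add (neg y) x)) x

namespace MVAlgebra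

variable {A : Type*}

/-- The top element `1 = ¬0`. -/
def one (M : MVAlgebra A) : A := M.neg M.zero

/-- The Łukasiewicz product `x ⊙ y = ¬(¬x ⊕ ¬y)`. -/
def mul (M : MVAlgebra A) (x y : A) : A := M.neg (M.add (M.neg x) (M.neg y))

/-- Truncated difference `x ⊖ y = x ⊙ ¬y`. -/
def sub (M : MVAlgebra A) (x y : A) : A := M.mul x (M.neg y)

/-- The natural order: `x ≤ y` iff `¬x ⊕ y = 1`. -/
def le (M : MVAlgebra A) (x y : A) : Prop := M.add (M.neg x) y = M.one

/-- Lattice join `x ∨ y = (x ⊖ y) ⊕ y`. -/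
def sup (M : MVAlgebra A) (x y : A) : A := M.add (M.sub x y) y

/-- Lattice meet `x ∧ y = ¬(¬x ∨ ¬y)`. -/
def inf (M : MVAlgebra A) (x y : A) : A := M.neg (M.sup (M.neg x) (M.neg y))

end MVAlgebra

namespace MVAlgebra

/-- `A` is represented as the product `Ł_{ns 0} × ⋯ × Ł_{ns (t-1)}` of finite
Łukasiewicz chains: there is a map `f : A → (Fin t → ℝ)` which is an injective
homomorphism for the pointwise MV-operations of `[0,1]`, and whose range is exactly
the set of tuples whose `i`-th component lies in `Ł_{ns i} = {k / ns i : k ≤ ns i}`. -/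
def IsChainProdRepr {A : Type*} (M : MVAlgebra A) (t : ℕ) (ns : Fin t → ℕ) : Prop :=
  (∀ i, 1 ≤ ns i) ∧
  ∃ f : A → Fin t → ℝ,
    Function.Injective f ∧
    (∀ a b : A, f (M.add a b) = fun i => min (f a i + f b i) 1) ∧
    (∀ a : A, f (M.neg a) = fun i => 1 - f a i) ∧
    (f M.zero = fun _ => 0) ∧
    (∀ g : Fin t → ℝ,
      (∀ i, ∃ k : ℕ, k ≤ ns i ∧ g i = (k : ℝ) / ns i) ↔ ∃ a : A, f a = g)

end MVAlgebra

set_option linter.unusedSectionVars false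

namespace MVAlgebra

variable {A : Type*} (M : MVAlgebra A)

lemma zero_add' (x : A) : M.add M.zero x = x := by rw [M.add_comm]; exact M.add_zero x

lemma add_one' (x : A) : M.add x M.one = M.one := M.add_neg_zero x

lemma one_add' (x : A) : M.add M.one x = M.one := by
  rw [M.add_comm]; exact M.add_neg_zero x

lemma neg_one' : M.neg M.one = M.zero := M.neg_neg M.zero

lemma neg_inj' {x y : A} (h : M.neg x = M.neg y) : x = y := by
  rw [← M.neg_neg x, h, M.neg_neg]

lemma add_neg_self (x : A) : M.add (M.neg x) x = M.one := by
  have h := M.luk x M.one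
  rw [M.add_one', M.neg_one', M.zero_add'] at h
  exact h.symm

lemma neg_add_self (x : A) : M.add x (M.neg x) = M.one := by
  rw [M.add_comm]; exact M.add_neg_self x

lemma le_refl' (x : A) : M.le x x := M.add_neg_self x

lemma zero_le' (x : A) : M.le M.zero x := by
  unfold le; rw [show M.neg M.zero = M.one from rfl]; exact M.one_add' x

lemma le_one' (x : A) : M.le x M.one := M.add_one' (M.neg x)

lemma sub_eq (x y : A) : M.sub x y = M.neg (M.add (M.neg x) y) := by
  unfold sub mul; rw [M.neg_neg]

lemma sup_comm' (x y : A) : M.sup x y = M.sup y x := by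
  unfold sup; rw [M.sub_eq, M.sub_eq]; exact M.luk x y

lemma sup_eq_of_le {x y : A} (h : M.le x y) : M.sup x y = y := by
  unfold sup; rw [M.sub_eq, h, M.neg_one', M.zero_add']

lemma le_add_self (x z : A) : M.le x (M.add x z) := by
  unfold le; rw [M.add_assoc, M.add_neg_self, M.one_add']

lemma le_add_self' (x z : A) : M.le x (M.add z x) := by
  rw [M.add_comm]; exact M.le_add_self x z

lemma exists_add_of_le {x y : A} (h : M.le x y) : ∃ z, M.add x z = y := by
  refine ⟨M.sub y x, ?_⟩
  have hs := M.sup_eq_of_le h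
  rw [M.sup_comm'] at hs
  conv_rhs => rw [← hs]
  unfold sup
  rw [M.add_comm]

lemma le_trans' {x y z : A} (h1 : M.le x y) (h2 : M.le y z) : M.le x z := by
  obtain ⟨u, hu⟩ := M.exists_add_of_le h1
  obtain ⟨v, hv⟩ := M.exists_add_of_le h2
  rw [← hv, ← hu, ← M.add_assoc]
  exact M.le_add_self _ _

lemma le_antisymm' {x y : A} (h1 : M.le x y) (h2 : M.le y x) : x = y := by
  have e1 := M.sup_eq_of_le h1
  have e2 := M.sup_eq_of_le h2
  rw [M.sup_comm'] at e2
  rw [← e1, e2]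

lemma add_le_add_left' {x y : A} (z : A) (h : M.le x y) : M.le (M.add z x) (M.add z y) := by
  obtain ⟨u, hu⟩ := M.exists_add_of_le h
  rw [← hu, M.add_assoc]
  exact M.le_add_self _ _

lemma add_le_add' {x y u v : A} (h1 : M.le x y) (h2 : M.le u v) :
    M.le (M.add x u) (M.add y v) := by
  have a1 := M.add_le_add_left' x h2
  have a2 := M.add_le_add_left' v h1
  rw [M.add_comm v x, M.add_comm v y] at a2
  exact M.le_trans' a1 a2

lemma neg_le_neg_iff {x y : A} : M.le (M.neg y) (M.neg x) ↔ M.le x y := by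
  unfold le; rw [M.neg_neg, M.add_comm]

lemma le_neg_comm {x y : A} : M.le x (M.neg y) ↔ M.le y (M.neg x) := by
  unfold le; rw [M.add_comm]

lemma mul_comm' (x y : A) : M.mul x y = M.mul y x := by
  unfold mul; rw [M.add_comm]

lemma mul_one' (x : A) : M.mul x M.one = x := by
  unfold mul; rw [M.neg_one', M.add_zero, M.neg_neg]

lemma one_mul' (x : A) : M.mul M.one x = x := by
  rw [M.mul_comm']; exact M.mul_one' x

lemma mul_zero' (x : A) : M.mul x M.zero = M.zero := by
  unfold mul
  rw [show M.neg M.zero = M.one from rfl, M.add_one', M.neg_one']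

lemma zero_mul' (x : A) : M.mul M.zero x = M.zero := by
  rw [M.mul_comm']; exact M.mul_zero' x

lemma mul_assoc' (x y z : A) : M.mul x (M.mul y z) = M.mul (M.mul x y) z := by
  unfold mul
  rw [M.neg_neg, M.neg_neg, M.add_assoc]

lemma mul_neg_self (x : A) : M.mul x (M.neg x) = M.zero := by
  unfold mul
  rw [M.neg_neg, M.add_neg_self, M.neg_one']

lemma neg_mul_self (x : A) : M.mul (M.neg x) x = M.zero := by
  rw [M.mul_comm']; exact M.mul_neg_self x

lemma neg_mul (x y : A) : M.neg (M.mul x y) = M.add (M.neg x) (M.neg y) := by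
  unfold mul; rw [M.neg_neg]

lemma neg_add (x y : A) : M.neg (M.add x y) = M.mul (M.neg x) (M.neg y) := by
  unfold mul; rw [M.neg_neg, M.neg_neg]

lemma mul_le_mul_left' {x y : A} (z : A) (h : M.le x y) : M.le (M.mul z x) (M.mul z y) := by
  rw [← M.neg_le_neg_iff, M.neg_mul, M.neg_mul]
  rw [← M.neg_le_neg_iff] at h
  exact M.add_le_add_left' _ h

lemma mul_le_mul' {x y u v : A} (h1 : M.le x y) (h2 : M.le u v) :
    M.le (M.mul x u) (M.mul y v) := by
  rw [← M.neg_le_neg_iff, M.neg_mul, M.neg_mul]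
  rw [← M.neg_le_neg_iff] at h1 h2
  exact M.add_le_add' h1 h2

lemma mul_le_left (x y : A) : M.le (M.mul x y) x := by
  have := M.mul_le_mul_left' x (M.le_one' y)
  rw [M.mul_one'] at this
  exact this

lemma mul_le_right (x y : A) : M.le (M.mul x y) y := by
  rw [M.mul_comm']; exact M.mul_le_left y x

lemma le_sup_left' (x y : A) : M.le x (M.sup x y) := by
  rw [M.sup_comm']; unfold sup; exact M.le_add_self' x _

lemma le_sup_right' (x y : A) : M.le y (M.sup x y) := by
  unfold sup; exact M.le_add_self' y _

lemma key2 (x y : A) : M.le x (M.add (M.neg y) (M.mul x y)) := by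
  have h := M.le_sup_left' x (M.neg y)
  have e : M.sup x (M.neg y) = M.add (M.neg y) (M.mul x y) := by
    unfold sup mul
    rw [M.sub_eq, M.add_comm]
  rw [← e]; exact h

lemma resid {x y z : A} : M.le (M.mul x y) z ↔ M.le x (M.add (M.neg y) z) := by
  constructor
  · intro h
    exact M.le_trans' (M.key2 x y) (M.add_le_add_left' _ h)
  · intro h
    have h1 : M.le (M.mul x y) (M.mul (M.add (M.neg y) z) y) := by
      have := M.mul_le_mul_left' y h
      rw [M.mul_comm' y x, M.mul_comm' y _] at this
      exact this
    refine M.le_trans' h1 ?_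
    -- le (mul (add (neg y) z) y) z
    unfold le
    rw [M.neg_mul, ← M.add_assoc]
    exact M.add_neg_self _

lemma mul_add_le (c a b : A) : M.le (M.mul c (M.add a b)) (M.add a (M.mul c b)) := by
  rw [M.mul_comm', M.resid]
  have hb := M.key2 b c
  have : M.le (M.add a b) (M.add a (M.add (M.neg c) (M.mul b c))) :=
    M.add_le_add_left' a hb
  refine M.le_trans' this ?_
  rw [M.mul_comm' b c, M.add_assoc, M.add_comm a (M.neg c), ← M.add_assoc]
  exact M.le_refl' _

lemma inf_eq_mul (x y : A) : M.inf x y = M.mul (M.add x (M.neg y)) y := by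
  unfold inf sup
  rw [M.sub_eq, M.neg_neg]
  unfold mul
  rfl

lemma inf_le_right' (x y : A) : M.le (M.inf x y) y := by
  rw [M.inf_eq_mul]; exact M.mul_le_right _ _

lemma inf_le_left' (x y : A) : M.le (M.inf x y) x := by
  rw [M.inf_eq_mul, M.mul_comm']
  have := M.mul_add_le y x (M.neg y)
  rw [M.mul_neg_self, M.add_zero] at this
  exact this

lemma inf_comm' (x y : A) : M.inf x y = M.inf y x := by
  unfold inf; rw [M.sup_comm']

lemma sup_le' {x y z : A} (h1 : M.le x z) (h2 : M.le y z) : M.le (M.sup x y) z := by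
  have mono : M.le (M.sup x y) (M.sup z y) := by
    unfold sup
    refine M.add_le_add' ?_ (M.le_refl' y)
    rw [M.sub_eq, M.sub_eq, ← M.neg_le_neg_iff, M.neg_neg, M.neg_neg]
    refine M.add_le_add' ?_ (M.le_refl' y)
    rw [M.neg_le_neg_iff]; exact h1
  refine M.le_trans' mono ?_
  rw [M.sup_comm', M.sup_eq_of_le h2]
  exact M.le_refl' z

lemma le_inf' {x y z : A} (h1 : M.le z x) (h2 : M.le z y) : M.le z (M.inf x y) := by
  unfold inf
  rw [M.le_neg_comm]
  refine M.sup_le' ?_ ?_ <;> rw [M.neg_le_neg_iff] <;> assumption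

lemma inf_eq_of_le {x y : A} (h : M.le x y) : M.inf x y = x := by
  unfold inf
  rw [M.sup_comm', M.sup_eq_of_le (M.neg_le_neg_iff.mpr h), M.neg_neg]

lemma sub_eq_zero_iff_le {x y : A} : M.sub x y = M.zero ↔ M.le x y := by
  rw [M.sub_eq]
  constructor
  · intro h
    have : M.neg (M.neg (M.add (M.neg x) y)) = M.neg M.zero := by rw [h]
    rw [M.neg_neg] at this
    exact this
  · intro h; rw [h]; exact M.neg_one'

lemma le_zero_eq {x : A} (h : M.le x M.zero) : x = M.zero :=
  M.le_antisymm' h (M.zero_le' x)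

lemma mul_add_neg_eq_inf (a b : A) : M.mul (M.add a b) (M.neg b) = M.inf a (M.neg b) := by
  rw [M.inf_eq_mul, M.neg_neg]

lemma mul_sup_distrib (a b c : A) :
    M.mul a (M.sup b c) = M.sup (M.mul a b) (M.mul a c) := by
  apply M.le_antisymm'
  · rw [M.mul_comm', M.resid]
    refine M.sup_le' ?_ ?_
    · refine M.le_trans' (M.key2 b a) ?_
      refine M.add_le_add_left' _ ?_
      rw [M.mul_comm']
      exact M.le_sup_left' _ _
    · refine M.le_trans' (M.key2 c a) ?_
      refine M.add_le_add_left' _ ?_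
      rw [M.mul_comm']
      exact M.le_sup_right' _ _
  · refine M.sup_le' ?_ ?_ <;> exact M.mul_le_mul_left' a (by first | exact M.le_sup_left' _ _ | exact M.le_sup_right' _ _)

lemma neg_inf (x y : A) : M.neg (M.inf x y) = M.sup (M.neg x) (M.neg y) := by
  unfold inf; rw [M.neg_neg]

lemma inf_add_subdistrib (x y z : A) :
    M.le (M.inf x (M.add y z)) (M.add (M.inf x y) (M.inf x z)) := by
  set w := M.inf x (M.add y z) with hw
  have target : M.le (M.mul w (M.neg (M.inf x y))) (M.inf x z) := by
    rw [M.neg_inf, M.mul_sup_distrib]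
    refine M.le_inf' ?_ ?_
    · refine M.sup_le' ?_ ?_ <;> exact M.le_trans' (M.mul_le_left _ _) (M.inf_le_left' _ _)
    · refine M.sup_le' ?_ ?_
      · have h1 : M.le (M.mul w (M.neg x)) (M.mul x (M.neg x)) :=
          M.mul_le_mul' (M.inf_le_left' _ _) (M.le_refl' _)
        rw [M.mul_neg_self] at h1
        exact M.le_trans' (M.le_trans' h1 (M.zero_le' _)) (M.le_refl' z)
      · have h2 : M.le (M.mul w (M.neg y)) (M.mul (M.add z y) (M.neg y)) := by
          refine M.mul_le_mul' ?_ (M.le_refl' _)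
          refine M.le_trans' (M.inf_le_right' _ _) ?_
          rw [M.add_comm]; exact M.le_refl' _
        rw [M.mul_add_neg_eq_inf] at h2
        exact M.le_trans' h2 (M.inf_le_left' _ _)
  have := M.resid.mp target
  rw [M.neg_neg] at this
  exact this

end MVAlgebra

namespace MVAlgebra

variable {A : Type*} (M : MVAlgebra A)

section Idem

variable {e : A} (he : M.add e e = e)

include he

lemma idem_inf_neg_self : M.inf e (M.neg e) = M.zero := by
  rw [M.inf_eq_mul, M.neg_neg, he, M.mul_neg_self]

lemma idem_mul_self : M.mul e e = e := by
  refine M.le_antisymm' (M.mul_le_left e e) ?_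
  have h1 : M.sub e (M.mul e e) = M.zero := by
    unfold sub
    rw [M.neg_mul]
    have : M.mul e (M.add (M.neg e) (M.neg e)) = M.inf (M.neg e) e := by
      rw [M.inf_eq_mul, M.mul_comm']
    rw [this, M.inf_comm', M.idem_inf_neg_self he]
  exact M.sub_eq_zero_iff_le.mp h1

lemma idem_neg : M.add (M.neg e) (M.neg e) = M.neg e := by
  have : M.neg (M.mul e e) = M.neg e := by rw [M.idem_mul_self he]
  rw [M.neg_mul] at this
  exact this

lemma idem_mul_eq_inf (a : A) : M.mul a e = M.inf a e := by
  refine M.le_antisymm' (M.le_inf' (M.mul_le_left _ _) (M.mul_le_right _ _)) ?_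
  set d := M.inf a e with hd
  have h1 : M.le d (M.add (M.neg e) (M.mul d e)) := M.key2 d e
  have h2 : d = M.inf d (M.add (M.neg e) (M.mul d e)) := (M.inf_eq_of_le h1).symm
  have h3 : M.le (M.inf d (M.add (M.neg e) (M.mul d e)))
      (M.add (M.inf d (M.neg e)) (M.inf d (M.mul d e))) := M.inf_add_subdistrib _ _ _
  have h4 : M.inf d (M.neg e) = M.zero := by
    refine M.le_zero_eq ?_
    have : M.le (M.inf d (M.neg e)) (M.inf e (M.neg e)) := by
      refine M.le_inf' ?_ (M.inf_le_right' _ _)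
      exact M.le_trans' (M.inf_le_left' _ _) (M.inf_le_right' a e)
    rw [M.idem_inf_neg_self he] at this
    exact this
  rw [h4, M.zero_add'] at h3
  rw [← h2] at h3
  have h5 : M.le d (M.mul d e) := M.le_trans' h3 (M.inf_le_right' d (M.mul d e))
  refine M.le_trans' h5 ?_
  exact M.mul_le_mul' (M.inf_le_left' a e) (M.le_refl' e)

lemma mul_eq_self_of_le {x : A} (hx : M.le x e) : M.mul x e = x := by
  rw [M.idem_mul_eq_inf he, M.inf_eq_of_le hx]

lemma idem_add_mul (a b : A) :
    M.mul (M.add a b) e = M.mul (M.add (M.mul a e) (M.mul b e)) e := by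
  refine M.le_antisymm' ?_ ?_
  · have step1 : M.le (M.mul (M.add a b) e) (M.add (M.mul a e) b) := by
      have := M.mul_add_le e b a
      rw [M.add_comm b a, M.mul_comm' e (M.add a b)] at this
      refine M.le_trans' this ?_
      rw [M.add_comm b (M.mul e a), M.mul_comm' e a]
      exact M.le_refl' _
    have step2 : M.le (M.mul (M.mul (M.add a b) e) e) (M.mul (M.add (M.mul a e) b) e) :=
      M.mul_le_mul' step1 (M.le_refl' e)
    have step3 : M.le (M.mul (M.add (M.mul a e) b) e) (M.add (M.mul a e) (M.mul b e)) := by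
      have := M.mul_add_le e (M.mul a e) b
      rw [M.mul_comm' e (M.add (M.mul a e) b), M.mul_comm' e b] at this
      exact this
    have hmm : M.mul (M.mul (M.add a b) e) e = M.mul (M.add a b) e := by
      rw [← M.mul_assoc', M.idem_mul_self he]
    rw [hmm] at step2
    have sum_le := M.le_trans' step2 step3
    have lee : M.le (M.mul (M.add a b) e) e := M.mul_le_right _ _
    have := M.le_inf' sum_le lee
    rw [← M.idem_mul_eq_inf he] at this
    exact this
  · refine M.mul_le_mul' ?_ (M.le_refl' e)
    exact M.add_le_add' (M.mul_le_left a e) (M.mul_le_left b e)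

lemma idem_neg_mul (a : A) :
    M.mul (M.neg (M.mul a e)) e = M.mul (M.neg a) e := by
  refine M.le_antisymm' ?_ ?_
  · have h1 : M.le (M.mul (M.neg (M.mul a e)) e) (M.neg a) := by
      rw [M.neg_mul, M.mul_comm']
      have := M.mul_add_le e (M.neg a) (M.neg e)
      rw [M.mul_comm' e (M.neg e), M.neg_mul_self, M.add_zero] at this
      exact this
    have h2 : M.le (M.mul (M.neg (M.mul a e)) e) e := M.mul_le_right _ _
    have := M.le_inf' h1 h2
    rw [← M.idem_mul_eq_inf he] at this
    exact this
  · refine M.mul_le_mul' ?_ (M.le_refl' e)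
    rw [← M.neg_le_neg_iff, M.neg_neg, M.neg_neg]
    exact M.mul_le_left a e

lemma idem_decomp (a : A) :
    M.add (M.mul a e) (M.mul a (M.neg e)) = a := by
  have hne : M.add (M.neg e) (M.neg e) = M.neg e := M.idem_neg he
  refine M.le_antisymm' ?_ ?_
  · -- u ⊕ v ≤ a
    have key : M.sub (M.add (M.mul a e) (M.mul a (M.neg e))) a = M.zero := by
      refine M.le_zero_eq ?_
      have hvz : M.mul (M.neg a) (M.mul a (M.neg e)) = M.zero := by
        rw [M.mul_assoc', M.neg_mul_self, M.zero_mul']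
      have huz : M.mul (M.neg a) (M.mul a e) = M.zero := by
        rw [M.mul_assoc', M.neg_mul_self, M.zero_mul']
      have b1 : M.le (M.sub (M.add (M.mul a e) (M.mul a (M.neg e))) a) e := by
        unfold sub
        rw [M.mul_comm']
        have h := M.mul_add_le (M.neg a) (M.mul a e) (M.mul a (M.neg e))
        rw [hvz, M.add_zero] at h
        exact M.le_trans' h (M.mul_le_right a e)
      have b2 : M.le (M.sub (M.add (M.mul a e) (M.mul a (M.neg e))) a) (M.neg e) := by
        unfold sub
        rw [M.mul_comm', M.add_comm (M.mul a e) (M.mul a (M.neg e))]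
        have h := M.mul_add_le (M.neg a) (M.mul a (M.neg e)) (M.mul a e)
        rw [huz, M.add_zero] at h
        exact M.le_trans' h (M.mul_le_right a (M.neg e))
      have := M.le_inf' b1 b2
      rw [M.idem_inf_neg_self he] at this
      exact this
    exact M.sub_eq_zero_iff_le.mp key
  · -- a ≤ u ⊕ v
    have hmul : M.mul a (M.neg (M.mul a e)) = M.mul a (M.neg e) := by
      rw [M.neg_mul]
      have h1 : M.mul a (M.add (M.neg a) (M.neg e)) = M.inf (M.neg e) a := by
        rw [M.inf_eq_mul, M.mul_comm', M.add_comm]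
      rw [h1, M.inf_comm', ← M.idem_mul_eq_inf hne]
    have hle : M.le (M.mul a (M.neg (M.mul a e))) (M.mul a (M.neg e)) := by
      rw [hmul]; exact M.le_refl' _
    have := M.resid.mp hle
    rw [M.neg_neg] at this
    exact this
lemma idem_proj {x y : A} (hx : M.le x e) (hy : M.le y (M.neg e)) :
    M.mul (M.add x y) e = x := by
  refine M.le_antisymm' ?_ ?_
  · have key : M.sub (M.mul (M.add x y) e) x = M.zero := by
      refine M.le_zero_eq ?_
      have b1 : M.le (M.sub (M.mul (M.add x y) e) x) (M.neg e) := by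
        unfold sub
        have h1 : M.le (M.mul (M.mul (M.add x y) e) (M.neg x))
            (M.mul (M.add x y) (M.neg x)) :=
          M.mul_le_mul' (M.mul_le_left _ _) (M.le_refl' _)
        have h2 : M.le (M.mul (M.add x y) (M.neg x)) y := by
          rw [M.mul_comm', M.add_comm x y]
          have h := M.mul_add_le (M.neg x) y x
          rw [M.neg_mul_self, M.add_zero] at h
          exact h
        exact M.le_trans' (M.le_trans' h1 h2) hy
      have b2 : M.le (M.sub (M.mul (M.add x y) e) x) e := by
        unfold sub
        exact M.le_trans' (M.mul_le_left _ _) (M.mul_le_right _ _)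
      have := M.le_inf' b2 b1
      rw [M.idem_inf_neg_self he] at this
      exact this
    exact M.sub_eq_zero_iff_le.mp key
  · have hx' : M.mul x e = x := M.mul_eq_self_of_le he hx
    conv_lhs => rw [← hx']
    exact M.mul_le_mul' (M.le_add_self x y) (M.le_refl' e)

lemma idem_proj' {x y : A} (hx : M.le x e) (hy : M.le y (M.neg e)) :
    M.mul (M.add x y) (M.neg e) = y := by
  have hne : M.add (M.neg e) (M.neg e) = M.neg e := M.idem_neg he
  have hx' : M.le x (M.neg (M.neg e)) := by rw [M.neg_neg]; exact hx
  have := M.idem_proj hne hy hx'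
  rw [M.add_comm y x] at this
  exact this

lemma pi_idem (a : A) : M.mul (M.mul a e) e = M.mul a e := by
  rw [← M.mul_assoc', M.idem_mul_self he]

lemma pi_add_left (a b : A) :
    M.mul (M.add (M.mul a e) b) e = M.mul (M.add a b) e := by
  rw [M.idem_add_mul he (M.mul a e) b, M.pi_idem he a, ← M.idem_add_mul he a b]

lemma pi_add_right (a b : A) :
    M.mul (M.add a (M.mul b e)) e = M.mul (M.add a b) e := by
  rw [M.add_comm a (M.mul b e), M.pi_add_left he b a, M.add_comm b a]

/-- The interval `[0, e]` below an idempotent `e`, as an MV-algebra. -/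
def subAlg : MVAlgebra {x : A // M.le x e} where
  add x y := ⟨M.mul (M.add x.1 y.1) e, M.mul_le_right _ _⟩
  neg x := ⟨M.mul (M.neg x.1) e, M.mul_le_right _ _⟩
  zero := ⟨M.zero, M.zero_le' e⟩
  add_assoc x y z := by
    apply Subtype.ext
    show M.mul (M.add x.1 (M.mul (M.add y.1 z.1) e)) e
        = M.mul (M.add (M.mul (M.add x.1 y.1) e) z.1) e
    rw [M.pi_add_right he, M.pi_add_left he, M.add_assoc]
  add_comm x y := by
    apply Subtype.ext
    show M.mul (M.add x.1 y.1) e = M.mul (M.add y.1 x.1) e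
    rw [M.add_comm]
  add_zero x := by
    apply Subtype.ext
    show M.mul (M.add x.1 M.zero) e = x.1
    rw [M.add_zero, M.mul_eq_self_of_le he x.2]
  neg_neg x := by
    apply Subtype.ext
    show M.mul (M.neg (M.mul (M.neg x.1) e)) e = x.1
    rw [M.idem_neg_mul he, M.neg_neg, M.mul_eq_self_of_le he x.2]
  add_neg_zero x := by
    apply Subtype.ext
    show M.mul (M.add x.1 (M.mul (M.neg M.zero) e)) e = M.mul (M.neg M.zero) e
    have h1 : M.mul (M.neg M.zero) e = e := M.one_mul' e
    rw [h1]
    refine M.le_antisymm' (M.mul_le_right _ _) ?_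
    have h2 : M.le (M.mul e e) (M.mul (M.add x.1 e) e) :=
      M.mul_le_mul' (M.le_add_self' e x.1) (M.le_refl' e)
    rw [M.idem_mul_self he] at h2
    exact h2
  luk x y := by
    apply Subtype.ext
    show M.mul (M.add (M.mul (M.neg (M.mul (M.add (M.mul (M.neg x.1) e) y.1) e)) e) y.1) e
        = M.mul (M.add (M.mul (M.neg (M.mul (M.add (M.mul (M.neg y.1) e) x.1) e)) e) x.1) e
    rw [M.pi_add_left he (M.neg x.1) y.1, M.pi_add_left he (M.neg y.1) x.1,
      M.idem_neg_mul he, M.idem_neg_mul he,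
      M.pi_add_left he, M.pi_add_left he, M.luk]

/-- Projection onto the interval `[0,e]`. -/
def projMap (e a : A) : {x : A // M.le x e} := ⟨M.mul a e, M.mul_le_right _ _⟩

lemma projMap_add (a b : A) :
    M.projMap e (M.add a b) = (M.subAlg he).add (M.projMap e a) (M.projMap e b) := by
  apply Subtype.ext
  show M.mul (M.add a b) e = M.mul (M.add (M.mul a e) (M.mul b e)) e
  exact M.idem_add_mul he a b

lemma projMap_neg (a : A) :
    M.projMap e (M.neg a) = (M.subAlg he).neg (M.projMap e a) := by
  apply Subtype.ext
  show M.mul (M.neg a) e = M.mul (M.neg (M.mul a e)) e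
  exact (M.idem_neg_mul he a).symm

lemma projMap_zero : M.projMap e M.zero = (M.subAlg he).zero := by
  apply Subtype.ext
  show M.mul M.zero e = M.zero
  exact M.zero_mul' e

/-- Decomposition of `A` along an idempotent. -/
def splitEquiv : A ≃ {x : A // M.le x e} × {x : A // M.le x (M.neg e)} where
  toFun a := (M.projMap e a, ⟨M.mul a (M.neg e), M.mul_le_right _ _⟩)
  invFun p := M.add p.1.1 p.2.1
  left_inv a := M.idem_decomp he a
  right_inv p := by
    ext
    · exact congrArg Subtype.val (Subtype.ext (M.idem_proj he p.1.2 p.2.2) :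
        M.projMap e (M.add p.1.1 p.2.1) = p.1)
    · exact M.idem_proj' he p.1.2 p.2.2

lemma splitEquiv_inv (x : {x : A // M.le x e}) (y : {x : A // M.le x (M.neg e)}) :
    M.projMap e (M.add x.1 y.1) = x := by
  apply Subtype.ext
  exact M.idem_proj he x.2 y.2

lemma splitEquiv_inv' (x : {x : A // M.le x e}) (y : {x : A // M.le x (M.neg e)}) :
    M.mul (M.add x.1 y.1) (M.neg e) = y.1 :=
  M.idem_proj' he x.2 y.2

end Idem

end MVAlgebra

namespace MVAlgebra

variable {A : Type*} (M : MVAlgebra A)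

/-- `pow k x = x ⊕ ⋯ ⊕ x` (`k` times). -/
def pow (k : ℕ) (x : A) : A := Nat.rec M.zero (fun _ ih => M.add ih x) k

@[simp] lemma pow_zero' (x : A) : M.pow 0 x = M.zero := rfl

lemma pow_succ' (k : ℕ) (x : A) : M.pow (k+1) x = M.add (M.pow k x) x := rfl

lemma pow_one_eq (x : A) : M.pow 1 x = x := by
  rw [M.pow_succ', M.pow_zero', M.zero_add']

lemma pow_add' (k l : ℕ) (x : A) :
    M.pow (k + l) x = M.add (M.pow k x) (M.pow l x) := by
  induction l with
  | zero => rw [Nat.add_zero, M.pow_zero', M.add_zero]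
  | succ l ih =>
      rw [← Nat.add_assoc, M.pow_succ', M.pow_succ', ih, M.add_assoc]

lemma pow_mono {k l : ℕ} (h : k ≤ l) (x : A) : M.le (M.pow k x) (M.pow l x) := by
  obtain ⟨m, rfl⟩ := Nat.exists_eq_add_of_le h
  rw [M.pow_add']
  exact M.le_add_self _ _

lemma le_pow {k : ℕ} (h : 1 ≤ k) (x : A) : M.le x (M.pow k x) := by
  have := M.pow_mono h x
  rw [M.pow_one_eq] at this
  exact this

lemma pow_succ_stab {k l : ℕ} {x : A} (hkl : k < l) (h : M.pow k x = M.pow l x) :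
    M.pow (k+1) x = M.pow k x := by
  refine M.le_antisymm' ?_ (M.pow_mono (Nat.le_succ k) x)
  have h1 := M.pow_mono (show k + 1 ≤ l from hkl) x
  rw [← h] at h1
  exact h1

lemma pow_stab {k : ℕ} {x : A} (h : M.pow (k+1) x = M.pow k x) :
    ∀ m, k ≤ m → M.pow m x = M.pow k x := by
  intro m hm
  induction m, hm using Nat.le_induction with
  | base => rfl
  | succ m hm ih =>
      rw [M.pow_succ', ih, ← M.pow_succ', h]

lemma exists_pow_idem [Finite A] (x : A) :
    ∃ k, 1 ≤ k ∧ M.add (M.pow k x) (M.pow k x) = M.pow k x := by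
  obtain ⟨a, b, hab, heq⟩ :=
    Finite.exists_ne_map_eq_of_infinite (fun n : ℕ => M.pow (n+1) x)
  rcases Nat.lt_or_ge a b with hlt | hge
  · have hs := M.pow_succ_stab (Nat.succ_lt_succ hlt) heq
    refine ⟨a + 1, Nat.le_add_left 1 a, ?_⟩
    rw [← M.pow_add']
    exact M.pow_stab hs _ (by omega)
  · have hba : b < a := by omega
    have hs := M.pow_succ_stab (Nat.succ_lt_succ hba) heq.symm
    refine ⟨b + 1, Nat.le_add_left 1 b, ?_⟩
    rw [← M.pow_add']
    exact M.pow_stab hs _ (by omega)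

/-- The natural partial order of an MV-algebra. -/
def toPO : PartialOrder A where
  le := M.le
  le_refl := M.le_refl'
  le_trans := fun _ _ _ => M.le_trans'
  le_antisymm := fun _ _ => M.le_antisymm'

lemma exists_atom_le [Finite A] (x : A) (hx : x ≠ M.zero) :
    ∃ c, c ≠ M.zero ∧ M.le c x ∧ ∀ b, b ≠ M.zero → M.le b c → b = c := by
  letI := M.toPO
  have hfin : ({y | y ≠ M.zero ∧ M.le y x} : Set A).Finite := Set.toFinite _
  have hne : ({y | y ≠ M.zero ∧ M.le y x} : Set A).Nonempty := ⟨x, hx, M.le_refl' x⟩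
  obtain ⟨c, hc, hmin⟩ := hfin.exists_minimal hne
  refine ⟨c, hc.1, hc.2, fun b hb hbc => ?_⟩
  exact M.le_antisymm' hbc (hmin (y := b) ⟨hb, M.le_trans' hbc hc.2⟩ hbc)

end MVAlgebra

namespace MVAlgebra

variable {A : Type*} (M : MVAlgebra A)

section Chain

variable [Finite A] (hnt : ∀ d, M.add d d = d → d = M.zero ∨ d = M.one)
  (h01 : M.one ≠ M.zero)

include hnt h01

lemma exists_pow_one {x : A} (hx : x ≠ M.zero) : ∃ k, 1 ≤ k ∧ M.pow k x = M.one := by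
  obtain ⟨k, hk1, hidem⟩ := M.exists_pow_idem x
  rcases hnt _ hidem with h | h
  · exfalso
    apply hx
    apply M.le_zero_eq
    rw [← h]
    exact M.le_pow hk1 x
  · exact ⟨k, hk1, h⟩

lemma exists_universal_atom :
    ∃ c, c ≠ M.zero ∧ (∀ b, b ≠ M.zero → M.le b c → b = c) ∧
      (∀ x, x ≠ M.zero → M.le c x) := by
  obtain ⟨c, hc0, _, hatom⟩ := M.exists_atom_le M.one h01
  refine ⟨c, hc0, hatom, fun x hx => ?_⟩
  obtain ⟨c', hc'0, hc'x, hatom'⟩ := M.exists_atom_le x hx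
  by_cases hinf : M.inf c c' = M.zero
  · exfalso
    obtain ⟨K, _, hK⟩ := M.exists_pow_one hnt h01 hc0
    have hind : ∀ k, M.inf (M.pow k c) c' = M.zero := by
      intro k
      induction k with
      | zero =>
          rw [M.pow_zero']
          exact M.le_zero_eq (M.inf_le_left' _ _)
      | succ k ih =>
          rw [M.pow_succ']
          refine M.le_zero_eq ?_
          have h := M.inf_add_subdistrib c' (M.pow k c) c
          rw [M.inf_comm' c' (M.pow k c), ih, M.inf_comm' c' c, hinf, M.add_zero] at h
          rw [M.inf_comm']
          exact h
    have := hind K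
    rw [hK] at this
    rw [M.inf_comm', M.inf_eq_of_le (M.le_one' c')] at this
    exact hc'0 this
  · have h1 : M.inf c c' = c := hatom _ hinf (M.inf_le_left' _ _)
    have h2 : M.le c c' := h1 ▸ M.inf_le_right' c c'
    have h3 : c = c' := hatom' c hc0 h2
    rw [h3]
    exact hc'x

theorem chain_repr : ∃ n : ℕ, M.IsChainProdRepr 1 (fun _ => n) := by
  classical
  obtain ⟨c, hc0, hatom, hcall⟩ := M.exists_universal_atom hnt h01
  have hex : ∃ k, M.pow k c = M.one := by
    obtain ⟨K, _, hK⟩ := M.exists_pow_one hnt h01 hc0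
    exact ⟨K, hK⟩
  set n := Nat.find hex with hn_def
  have hn : M.pow n c = M.one := Nat.find_spec hex
  have hmin : ∀ m, m < n → M.pow m c ≠ M.one := fun m hm => Nat.find_min hex hm
  have hn1 : 1 ≤ n := by
    rcases Nat.eq_zero_or_pos n with h | h
    · exfalso; apply h01; rw [← hn, h, M.pow_zero']
    · exact h
  have hn0 : (n : ℝ) ≠ 0 := Nat.cast_ne_zero.mpr (by omega)
  have hpow_top : ∀ m, n ≤ m → M.pow m c = M.one := by
    intro m hm
    obtain ⟨j, rfl⟩ := Nat.exists_eq_add_of_le hm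
    rw [M.pow_add', hn, M.one_add']
  have huniq : ∀ k l, k ≤ n → l ≤ n → M.pow k c = M.pow l c → k = l := by
    have hinj : ∀ k l, k < l → l ≤ n → M.pow k c ≠ M.pow l c := by
      intro k l hkl hln heq
      have hs := M.pow_succ_stab hkl heq
      have := M.pow_stab hs n (le_trans (le_of_lt hkl) hln)
      exact hmin k (lt_of_lt_of_le hkl hln) (by rw [← this, hn])
    intro k l hk hl h
    rcases lt_trichotomy k l with hlt | he | hgt
    · exact absurd h (hinj k l hlt hl)
    · exact he
    · exact absurd h.symm (hinj l k hgt hk)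
  have hsurj : ∀ a, ∃ k, k ≤ n ∧ M.pow k c = a := by
    intro a
    let T := (Finset.range (n+1)).filter (fun k => M.le (M.pow k c) a)
    have h0T : 0 ∈ T := Finset.mem_filter.mpr
      ⟨Finset.mem_range.mpr (by omega), by rw [M.pow_zero']; exact M.zero_le' a⟩
    have hTne : T.Nonempty := ⟨0, h0T⟩
    have hk₀T := T.max'_mem hTne
    obtain ⟨hk₀r, hk₀le⟩ := Finset.mem_filter.mp hk₀T
    set k₀ := T.max' hTne with hk₀def
    have hk₀n : k₀ < n + 1 := Finset.mem_range.mp hk₀r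
    by_cases heq : M.pow k₀ c = a
    · exact ⟨k₀, by omega, heq⟩
    by_cases hk₀n' : k₀ = n
    · refine ⟨n, le_refl n, ?_⟩
      rw [hn]
      rw [hk₀n', hn] at hk₀le
      exact M.le_antisymm' hk₀le (M.le_one' a)
    · exfalso
      have hsub : M.sub a (M.pow k₀ c) ≠ M.zero := by
        intro h
        exact heq (M.le_antisymm' hk₀le (M.sub_eq_zero_iff_le.mp h))
      have hcle : M.le c (M.sub a (M.pow k₀ c)) := hcall _ hsub
      have hle1 : M.le (M.pow (k₀+1) c) a := by
        rw [M.pow_succ']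
        have h1 : M.le (M.add (M.pow k₀ c) c) (M.add (M.pow k₀ c) (M.sub a (M.pow k₀ c))) :=
          M.add_le_add_left' _ hcle
        have h2 : M.add (M.pow k₀ c) (M.sub a (M.pow k₀ c)) = a := by
          rw [M.add_comm]
          show M.sup a (M.pow k₀ c) = a
          rw [M.sup_comm', M.sup_eq_of_le hk₀le]
        rw [h2] at h1
        exact h1
      have hmem : k₀ + 1 ∈ T :=
        Finset.mem_filter.mpr ⟨Finset.mem_range.mpr (by omega), hle1⟩
      have := T.le_max' (k₀+1) hmem
      omega
  have hnegc : M.neg c = M.pow (n-1) c := by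
    obtain ⟨m, hm, hmc⟩ := hsurj (M.neg c)
    have hmn : m ≠ n := by
      intro h
      apply hc0
      have : M.neg c = M.one := by rw [← hmc, h, hn]
      have := congrArg M.neg this
      rw [M.neg_neg, M.neg_one'] at this
      exact this
    have hm1 : M.pow (m+1) c = M.one := by
      rw [M.pow_succ', hmc, M.add_neg_self]
    have : ¬ (m + 1 < n) := fun h => hmin _ h hm1
    have hmeq : m = n - 1 := by omega
    rw [← hmeq, ← hmc]
  have hnegpow : ∀ k, k ≤ n → M.neg (M.pow k c) = M.pow (n-k) c := by
    intro k
    induction k with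
    | zero =>
        intro _
        rw [M.pow_zero', Nat.sub_zero, hn]
        rfl
    | succ k ih =>
        intro hk1
        have hk : k ≤ n := by omega
        rw [M.pow_succ', M.neg_add, ih hk]
        have hrw : n - k = (n - (k+1)) + 1 := by omega
        rw [hrw, M.pow_succ', M.mul_add_neg_eq_inf, hnegc]
        exact M.inf_eq_of_le (M.pow_mono (by omega) c)
  -- the representation
  have hgex : ∀ a : A, ∃ k, k ≤ n ∧ M.pow k c = a := hsurj
  set g : A → ℕ := fun a => (hgex a).choose with hgdef
  have hg1 : ∀ a, g a ≤ n := fun a => (hgex a).choose_spec.1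
  have hg2 : ∀ a, M.pow (g a) c = a := fun a => (hgex a).choose_spec.2
  have hgpow : ∀ k, k ≤ n → g (M.pow k c) = k := by
    intro k hk
    exact huniq _ _ (hg1 _) hk (hg2 _)
  refine ⟨n, fun _ => hn1, fun a => fun _ => (g a : ℝ) / n, ?_, ?_, ?_, ?_, ?_⟩
  · -- injective
    intro a b hab
    have h := congrFun hab 0
    simp only at h
    have : (g a : ℝ) = g b := by
      field_simp at h
      exact_mod_cast h
    have hgg : g a = g b := Nat.cast_injective this
    rw [← hg2 a, ← hg2 b, hgg]
  · -- add
    intro a b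
    funext i
    have hsum : M.add a b = M.pow (min (g a + g b) n) c := by
      rcases le_or_gt (g a + g b) n with h | h
      · rw [min_eq_left h, M.pow_add', hg2, hg2]
      · rw [min_eq_right (le_of_lt h), hn, ← hpow_top _ (le_of_lt h), M.pow_add', hg2, hg2]
    have hgval : g (M.add a b) = min (g a + g b) n := by
      rw [hsum]; exact hgpow _ (min_le_right _ _)
    show (g (M.add a b) : ℝ) / n = min ((g a : ℝ)/n + (g b : ℝ)/n) 1
    rw [hgval]
    rw [Nat.cast_min, ← min_div_div_right (le_of_lt (by positivity : (0:ℝ) < n)), Nat.cast_add, add_div, div_self hn0]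
  · -- neg
    intro a
    funext i
    have hneg : M.neg a = M.pow (n - g a) c := by
      rw [← hg2 a, hnegpow _ (hg1 a), hg2]
    have hgval : g (M.neg a) = n - g a := by
      rw [hneg]; exact hgpow _ (by omega)
    show (g (M.neg a) : ℝ) / n = 1 - (g a : ℝ)/n
    rw [hgval, Nat.cast_sub (hg1 a), sub_div, div_self hn0]
  · -- zero
    funext i
    show (g M.zero : ℝ) / n = 0
    have : g M.zero = 0 := by
      have := hgpow 0 (by omega)
      rw [M.pow_zero'] at this
      exact this
    rw [this, Nat.cast_zero, zero_div]
  · -- range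
    intro g0
    constructor
    · intro h
      obtain ⟨k, hk, hk2⟩ := h 0
      refine ⟨M.pow k c, ?_⟩
      funext i
      show (g (M.pow k c) : ℝ) / n = g0 i
      rw [hgpow k hk, Subsingleton.elim i 0, hk2]
    · intro ⟨a, ha⟩ i
      refine ⟨g a, hg1 a, ?_⟩
      rw [← ha]

end Chain

end MVAlgebra

namespace MVAlgebra

universe u

theorem exists_repr_aux :
    ∀ (N : ℕ) {A : Type u} [Finite A] (M : MVAlgebra A), Nat.card A ≤ N →
      ∃ t ns, M.IsChainProdRepr t ns := by
  intro N
  induction N with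
  | zero =>
      intro A _ M hcard
      have : Nonempty A := ⟨M.zero⟩
      have := Nat.card_pos (α := A)
      omega
  | succ N ih =>
      intro A _ M hcard
      by_cases h01 : M.one = M.zero
      · -- trivial algebra
        have hall : ∀ x : A, x = M.one := by
          intro x
          have h1 : M.add x M.one = M.one := M.add_one' x
          have h2 : M.add x M.zero = x := M.add_zero x
          rw [h01] at h1
          exact h2.symm.trans (h1.trans h01.symm)
        refine ⟨0, Fin.elim0, fun i => i.elim0, fun _ => fun i => i.elim0,
          fun a b _ => (hall a).trans (hall b).symm, ?_, ?_, ?_, ?_⟩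
        · intro a b; funext i; exact i.elim0
        · intro a; funext i; exact i.elim0
        · funext i; exact i.elim0
        · intro g0
          constructor
          · intro _; exact ⟨M.zero, funext fun i => i.elim0⟩
          · intro _ i; exact i.elim0
      by_cases hnt : ∀ d, M.add d d = d → d = M.zero ∨ d = M.one
      · obtain ⟨n, hrep⟩ := M.chain_repr hnt h01
        exact ⟨1, fun _ => n, hrep⟩
      · push_neg at hnt
        obtain ⟨e, he, he0, he1⟩ := hnt
        have hne : M.add (M.neg e) (M.neg e) = M.neg e := M.idem_neg he
        have hne0 : M.neg e ≠ M.zero := by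
          intro h
          apply he1
          have := congrArg M.neg h
          rw [M.neg_neg] at this
          rw [this]; rfl
        -- the two subalgebras
        set B₁ := {x : A // M.le x e} with hB₁
        set B₂ := {x : A // M.le x (M.neg e)} with hB₂
        have hcard_eq : Nat.card A = Nat.card B₁ * Nat.card B₂ := by
          rw [Nat.card_congr (M.splitEquiv he), Nat.card_prod]
        have hnt₁ : Nontrivial B₁ :=
          ⟨⟨⟨M.zero, M.zero_le' e⟩, ⟨e, M.le_refl' e⟩, fun h => he0 (congrArg Subtype.val h).symm⟩⟩
        have hnt₂ : Nontrivial B₂ :=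
          ⟨⟨⟨M.zero, M.zero_le' (M.neg e)⟩, ⟨M.neg e, M.le_refl' (M.neg e)⟩,
            fun h => hne0 (congrArg Subtype.val h).symm⟩⟩
        have hc₁ : 2 ≤ Nat.card B₁ := Finite.one_lt_card_iff_nontrivial.mpr hnt₁
        have hc₂ : 2 ≤ Nat.card B₂ := Finite.one_lt_card_iff_nontrivial.mpr hnt₂
        have hb₁ : Nat.card B₁ ≤ N := by nlinarith
        have hb₂ : Nat.card B₂ ≤ N := by nlinarith
        obtain ⟨t₁, ns₁, hns₁, f₁, hinj₁, hadd₁, hneg₁, hzero₁, hrange₁⟩ :=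
          ih (M.subAlg he) hb₁
        obtain ⟨t₂, ns₂, hns₂, f₂, hinj₂, hadd₂, hneg₂, hzero₂, hrange₂⟩ :=
          ih (M.subAlg hne) hb₂
        refine ⟨t₁ + t₂, Fin.append ns₁ ns₂,
          ?_, fun a => Fin.append (f₁ (M.projMap e a)) (f₂ (M.projMap (M.neg e) a)),
          ?_, ?_, ?_, ?_, ?_⟩
        · intro i
          refine Fin.addCases (fun i => ?_) (fun j => ?_) i
          · rw [Fin.append_left]; exact hns₁ i
          · rw [Fin.append_right]; exact hns₂ j
        · -- injective
          intro a b hab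
          have h1 : f₁ (M.projMap e a) = f₁ (M.projMap e b) := by
            funext i
            have := congrFun hab (Fin.castAdd t₂ i)
            simpa only [Fin.append_left] using this
          have h2 : f₂ (M.projMap (M.neg e) a) = f₂ (M.projMap (M.neg e) b) := by
            funext j
            have := congrFun hab (Fin.natAdd t₁ j)
            simpa only [Fin.append_right] using this
          have e1 : M.projMap e a = M.projMap e b := hinj₁ h1
          have e2 : M.projMap (M.neg e) a = M.projMap (M.neg e) b := hinj₂ h2
          have v1 : M.mul a e = M.mul b e := congrArg Subtype.val e1
          have v2 : M.mul a (M.neg e) = M.mul b (M.neg e) := congrArg Subtype.val e2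
          rw [← M.idem_decomp he a, ← M.idem_decomp he b, v1, v2]
        · -- add
          intro a b
          funext i
          refine Fin.addCases (motive := fun i =>
            Fin.append (f₁ (M.projMap e (M.add a b))) (f₂ (M.projMap (M.neg e) (M.add a b))) i
              = min (Fin.append (f₁ (M.projMap e a)) (f₂ (M.projMap (M.neg e) a)) i
                + Fin.append (f₁ (M.projMap e b)) (f₂ (M.projMap (M.neg e) b)) i) 1)
            (fun i => ?_) (fun j => ?_) i
          · simp only [Fin.append_left]
            rw [M.projMap_add he a b, hadd₁]
          · simp only [Fin.append_right]
            rw [M.projMap_add hne a b, hadd₂]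
        · -- neg
          intro a
          funext i
          refine Fin.addCases (motive := fun i =>
            Fin.append (f₁ (M.projMap e (M.neg a))) (f₂ (M.projMap (M.neg e) (M.neg a))) i
              = 1 - Fin.append (f₁ (M.projMap e a)) (f₂ (M.projMap (M.neg e) a)) i)
            (fun i => ?_) (fun j => ?_) i
          · simp only [Fin.append_left]
            rw [M.projMap_neg he a, hneg₁]
          · simp only [Fin.append_right]
            rw [M.projMap_neg hne a, hneg₂]
        · -- zero
          funext i
          refine Fin.addCases (motive := fun i =>
            Fin.append (f₁ (M.projMap e M.zero)) (f₂ (M.projMap (M.neg e) M.zero)) i = 0)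
            (fun i => ?_) (fun j => ?_) i
          · simp only [Fin.append_left]
            rw [M.projMap_zero he, hzero₁]
          · simp only [Fin.append_right]
            rw [M.projMap_zero hne, hzero₂]
        · -- range
          intro g0
          constructor
          · intro h
            have hprop₁ : ∀ i, ∃ k : ℕ, k ≤ ns₁ i ∧
                g0 (Fin.castAdd t₂ i) = (k : ℝ) / ns₁ i := by
              intro i
              have := h (Fin.castAdd t₂ i)
              simpa only [Fin.append_left] using this
            have hprop₂ : ∀ j, ∃ k : ℕ, k ≤ ns₂ j ∧
                g0 (Fin.natAdd t₁ j) = (k : ℝ) / ns₂ j := by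
              intro j
              have := h (Fin.natAdd t₁ j)
              simpa only [Fin.append_right] using this
            obtain ⟨a₁, ha₁⟩ := (hrange₁ _).mp hprop₁
            obtain ⟨a₂, ha₂⟩ := (hrange₂ _).mp hprop₂
            refine ⟨M.add a₁.1 a₂.1, ?_⟩
            have hp₁ : M.projMap e (M.add a₁.1 a₂.1) = a₁ := M.splitEquiv_inv he a₁ a₂
            have hp₂ : M.projMap (M.neg e) (M.add a₁.1 a₂.1) = a₂ :=
              Subtype.ext (M.splitEquiv_inv' he a₁ a₂)
            funext i
            refine Fin.addCases (motive := fun i =>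
              Fin.append (f₁ (M.projMap e (M.add a₁.1 a₂.1)))
                (f₂ (M.projMap (M.neg e) (M.add a₁.1 a₂.1))) i = g0 i)
              (fun i => ?_) (fun j => ?_) i
            · simp only [Fin.append_left]
              rw [hp₁, ha₁]
            · simp only [Fin.append_right]
              rw [hp₂, ha₂]
          · rintro ⟨a, rfl⟩ i
            refine Fin.addCases (motive := fun i => ∃ k : ℕ,
              k ≤ Fin.append ns₁ ns₂ i ∧
              Fin.append (f₁ (M.projMap e a)) (f₂ (M.projMap (M.neg e) a)) i
                = (k : ℝ) / Fin.append ns₁ ns₂ i)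
              (fun i => ?_) (fun j => ?_) i
            · simp only [Fin.append_left]
              exact (hrange₁ (f₁ (M.projMap e a))).mpr ⟨_, rfl⟩ i
            · simp only [Fin.append_right]
              exact (hrange₂ (f₂ (M.projMap (M.neg e) a))).mpr ⟨_, rfl⟩ j

theorem exists_repr {A : Type u} [Finite A] (M : MVAlgebra A) :
    ∃ t ns, M.IsChainProdRepr t ns :=
  exists_repr_aux (Nat.card A) M le_rfl

end MVAlgebra

namespace MVAlgebra

variable {A : Type*}

/-- An atom of the Boolean algebra of idempotents. -/
def IsAtomIdem (M : MVAlgebra A) (e : A) : Prop :=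
  M.add e e = e ∧ e ≠ M.zero ∧
    ∀ d, M.add d d = d → M.le d e → d = M.zero ∨ d = e

theorem repr_card_fiber [Finite A] (M : MVAlgebra A) {t : ℕ} {ns : Fin t → ℕ}
    (h : M.IsChainProdRepr t ns) (n : ℕ) :
    Nat.card {i : Fin t // ns i = n} =
      Nat.card {e : A // M.IsAtomIdem e ∧ Nat.card {x : A // M.le x e} = n + 1} := by
  classical
  obtain ⟨hns, f, hinj, hadd, hneg, hzero, hrange⟩ := h
  have hnsR : ∀ i, (0:ℝ) < ns i := by
    intro i
    exact_mod_cast Nat.lt_of_lt_of_le Nat.zero_lt_one (hns i)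
  have hone : f M.one = fun _ => (1:ℝ) := by
    show f (M.neg M.zero) = _
    rw [hneg, hzero]
    funext i
    norm_num
  have hbound : ∀ (a : A) i, 0 ≤ f a i ∧ f a i ≤ 1 := by
    intro a i
    obtain ⟨k, hk, hk2⟩ := (hrange (f a)).mpr ⟨a, rfl⟩ i
    constructor
    · rw [hk2]; positivity
    · rw [hk2, div_le_one (hnsR i)]
      exact_mod_cast hk
  have hle : ∀ a b : A, M.le a b ↔ ∀ i, f a i ≤ f b i := by
    intro a b
    constructor
    · intro h i
      have h' : f (M.add (M.neg a) b) = f M.one := by rw [h]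
      rw [hadd, hneg, hone] at h'
      have hthis : min (1 - f a i + f b i) 1 = 1 := congrFun h' i
      have h1 : (1:ℝ) ≤ 1 - f a i + f b i := by
        by_contra hcon
        push_neg at hcon
        rw [min_eq_left (le_of_lt hcon)] at hthis
        linarith
      linarith
    · intro h
      show M.add (M.neg a) b = M.one
      apply hinj
      rw [hadd, hneg, hone]
      funext i
      show min (1 - f a i + f b i) 1 = 1
      exact min_eq_right (by linarith [h i, (hbound b i).2])
  have hidem : ∀ a : A, M.add a a = a ↔ ∀ i, f a i = 0 ∨ f a i = 1 := by
    intro a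
    constructor
    · intro h i
      have h' : f (M.add a a) = f a := by rw [h]
      rw [hadd] at h'
      have hthis : min (f a i + f a i) 1 = f a i := congrFun h' i
      by_cases hc : f a i + f a i ≤ 1
      · rw [min_eq_left hc] at hthis; left; linarith
      · push_neg at hc
        rw [min_eq_right (by linarith)] at hthis
        right; exact hthis.symm
    · intro h
      apply hinj
      rw [hadd]
      funext i
      show min (f a i + f a i) 1 = f a i
      rcases h i with h' | h' <;> rw [h'] <;> norm_num
  have hErange : ∀ i₀ : Fin t, ∃ a : A, f a = fun j => if j = i₀ then (1:ℝ) else 0 := by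
    intro i₀
    apply (hrange _).mp
    intro i
    by_cases hii : i = i₀
    · refine ⟨ns i, le_rfl, ?_⟩
      show (if i = i₀ then (1:ℝ) else 0) = (ns i : ℝ) / (ns i : ℝ)
      rw [if_pos hii, div_self (ne_of_gt (hnsR i))]
    · refine ⟨0, Nat.zero_le _, ?_⟩
      show (if i = i₀ then (1:ℝ) else 0) = ((0:ℕ) : ℝ) / (ns i : ℝ)
      rw [if_neg hii, Nat.cast_zero, zero_div]
  choose E hE using hErange
  have hcardI : ∀ i₀ : Fin t, Nat.card {x : A // M.le x (E i₀)} = ns i₀ + 1 := by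
    intro i₀
    have hvec : ∀ k : Fin (ns i₀ + 1), ∃ a : A,
        f a = fun j => if j = i₀ then (k : ℝ)/(ns i₀) else 0 := by
      intro k
      apply (hrange _).mp
      intro i
      by_cases hii : i = i₀
      · subst hii
        refine ⟨k, by omega, ?_⟩
        show (if i = i then ((k : ℕ) : ℝ)/(ns i) else 0) = ((k:ℕ) : ℝ) / (ns i : ℝ)
        rw [if_pos rfl]
      · refine ⟨0, Nat.zero_le _, ?_⟩
        show (if i = i₀ then ((k : ℕ) : ℝ)/(ns i₀) else 0) = ((0:ℕ) : ℝ) / (ns i : ℝ)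
        rw [if_neg hii, Nat.cast_zero, zero_div]
    choose v hv using hvec
    have hFle : ∀ k : Fin (ns i₀ + 1), M.le (v k) (E i₀) := by
      intro k
      rw [hle]
      intro j
      simp only [hv, hE]
      by_cases hjj : j = i₀
      · rw [if_pos hjj, if_pos hjj, div_le_one (hnsR i₀)]
        exact_mod_cast Nat.le_of_lt_succ k.isLt
      · rw [if_neg hjj, if_neg hjj]
    have hbij : Function.Bijective
        (fun k : Fin (ns i₀ + 1) => (⟨v k, hFle k⟩ : {x : A // M.le x (E i₀)})) := by
      constructor
      · intro k k' hkk
        have hv2 : v k = v k' := congrArg Subtype.val hkk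
        have hthis : ((k : ℕ) : ℝ)/(ns i₀) = ((k' : ℕ) : ℝ)/(ns i₀) := by
          have h0 := congrFun ((hv k).symm.trans ((congrArg f hv2).trans (hv k'))) i₀
          simpa using h0
        have hkk' : ((k : ℕ) : ℝ) = ((k' : ℕ) : ℝ) := by
          rw [div_eq_div_iff (ne_of_gt (hnsR i₀)) (ne_of_gt (hnsR i₀))] at hthis
          exact mul_right_cancel₀ (ne_of_gt (hnsR i₀)) hthis
        exact Fin.ext (by exact_mod_cast hkk')
      · rintro ⟨x, hx⟩
        rw [hle] at hx
        obtain ⟨k, hk, hk2⟩ := (hrange (f x)).mpr ⟨x, rfl⟩ i₀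
        refine ⟨⟨k, by omega⟩, ?_⟩
        apply Subtype.ext
        apply hinj
        rw [hv]
        funext j
        show (if j = i₀ then (((⟨k, by omega⟩ : Fin (ns i₀ + 1)) : ℕ) : ℝ)/(ns i₀) else 0)
          = f x j
        by_cases hjj : j = i₀
        · subst hjj
          rw [if_pos rfl]
          exact hk2.symm
        · rw [if_neg hjj]
          have h1 := hx j
          simp only [hE] at h1
          rw [if_neg hjj] at h1
          exact (le_antisymm h1 (hbound x j).1).symm
    rw [← Nat.card_congr (Equiv.ofBijective _ hbij), Nat.card_eq_fintype_card,
      Fintype.card_fin]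
  have hatomE : ∀ i₀ : Fin t, M.IsAtomIdem (E i₀) := by
    intro i₀
    refine ⟨?_, ?_, ?_⟩
    · rw [hidem]
      intro j
      simp only [hE]
      by_cases hjj : j = i₀
      · right; rw [if_pos hjj]
      · left; rw [if_neg hjj]
    · intro h
      have hthis := congrFun ((congrArg f h).trans hzero) i₀
      simp [hE] at hthis
    · intro d hd hdle
      rw [hle] at hdle
      have hd01 := (hidem d).mp hd
      have hzero_comp : ∀ j, j ≠ i₀ → f d j = 0 := by
        intro j hjj
        have h1 := hdle j
        simp only [hE] at h1
        rw [if_neg hjj] at h1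
        exact le_antisymm h1 (hbound d j).1
      rcases hd01 i₀ with h' | h'
      · left
        apply hinj
        rw [hzero]
        funext j
        show f d j = (0:ℝ)
        by_cases hjj : j = i₀
        · rw [hjj]; exact h'
        · exact hzero_comp j hjj
      · right
        apply hinj
        rw [hE]
        funext j
        show f d j = (if j = i₀ then (1:ℝ) else 0)
        by_cases hjj : j = i₀
        · rw [if_pos hjj, hjj]; exact h'
        · rw [if_neg hjj]; exact hzero_comp j hjj
  have hatomOnly : ∀ e : A, M.IsAtomIdem e → ∃ i₀, e = E i₀ := by
    rintro e ⟨hid, hne0, hmin⟩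
    have he01 := (hidem e).mp hid
    have hx : ∃ i₀, f e i₀ = 1 := by
      by_contra hcon
      push_neg at hcon
      apply hne0
      apply hinj
      rw [hzero]
      funext j
      show f e j = (0:ℝ)
      rcases he01 j with h' | h'
      · exact h'
      · exact absurd h' (hcon j)
    obtain ⟨i₀, hi₀⟩ := hx
    have hEle : M.le (E i₀) e := by
      rw [hle]
      intro j
      simp only [hE]
      by_cases hjj : j = i₀
      · rw [if_pos hjj, hjj, hi₀]
      · rw [if_neg hjj]; exact (hbound e j).1
    rcases hmin (E i₀) (hatomE i₀).1 hEle with h' | h'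
    · exact absurd h' (hatomE i₀).2.1
    · exact ⟨i₀, h'.symm⟩
  have hEinj : Function.Injective E := by
    intro i i' hii
    have hthis : (if i = i then (1:ℝ) else 0) = (if i = i' then (1:ℝ) else 0) :=
      congrFun ((hE i).symm.trans ((congrArg f hii).trans (hE i'))) i
    rw [if_pos rfl] at hthis
    by_contra hcon
    rw [if_neg hcon] at hthis
    norm_num at hthis
  have hbij2 : Function.Bijective (fun p : {i : Fin t // ns i = n} =>
      (⟨E p.1, hatomE p.1, by rw [hcardI p.1, p.2]⟩ :
        {e : A // M.IsAtomIdem e ∧ Nat.card {x : A // M.le x e} = n + 1})) := by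
    constructor
    · intro p q hpq
      exact Subtype.ext (hEinj (congrArg Subtype.val hpq))
    · rintro ⟨e, hat, hc⟩
      obtain ⟨i₀, rfl⟩ := hatomOnly e hat
      rw [hcardI i₀] at hc
      exact ⟨⟨i₀, by omega⟩, rfl⟩
  exact Nat.card_congr (Equiv.ofBijective _ hbij2)

theorem repr_unique [Finite A] (M : MVAlgebra A) {t s : ℕ} {ns : Fin t → ℕ}
    {ms : Fin s → ℕ} (h1 : M.IsChainProdRepr t ns) (h2 : M.IsChainProdRepr s ms) :
    ∃ e : Fin t ≃ Fin s, ∀ i, ms (e i) = ns i := by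
  classical
  have hfib : ∀ n, Nat.card {i : Fin t // ns i = n} = Nat.card {j : Fin s // ms j = n} :=
    fun n => (M.repr_card_fiber h1 n).trans (M.repr_card_fiber h2 n).symm
  have F : ∀ n, {i : Fin t // ns i = n} ≃ {j : Fin s // ms j = n} := fun n =>
    Fintype.equivOfCardEq (by
      rw [← Nat.card_eq_fintype_card, ← Nat.card_eq_fintype_card]
      exact hfib n)
  refine ⟨(Equiv.sigmaFiberEquiv ns).symm.trans
    ((Equiv.sigmaCongrRight F).trans (Equiv.sigmaFiberEquiv ms)), ?_⟩
  intro i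
  exact ((F (ns i)) ⟨i, rfl⟩).2

end MVAlgebra

/-- Every finite MV-algebra is isomorphic to a finite product `Ł_{n₁} × ⋯ × Ł_{n_t}` of
finite Łukasiewicz chains, and this representation is unique up to reordering of the
factors. -/
theorem mv_finite_chainProdRepr {A : Type*} [Finite A] (M : MVAlgebra A) :
    (∃ (t : ℕ) (ns : Fin t → ℕ), M.IsChainProdRepr t ns) ∧
    (∀ (t s : ℕ) (ns : Fin t → ℕ) (ms : Fin s → ℕ),
      M.IsChainProdRepr t ns → M.IsChainProdRepr s ms →
      ∃ e : Fin t ≃ Fin s, ∀ i, ms (e i) = ns i) := by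
  constructor
  · exact M.exists_repr
  · intro t s ns ms h1 h2
    exact M.repr_unique h1 h2
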